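/- For every n ≥ 1, every ℓ ≥ 2, and every vertex-weight function W : V(K_n) → [0,∞), the product-edge-weight extremal number ex(n, w_Π, K_ℓ) — the maximum of Σ_{uv ∈ E(G)} W(u)·W(v) over all K_ℓ-free subgraphs G of K_n — is equal to the maximum, over all partitions 𝒫 of the vertex set V(K_n) into ℓ−1 (possibly empty) parts, of Σ_{P ≠ P' ∈ 𝒫} W(P)·W(P'), where W(S) = Σ_{v ∈ S} W(v) and the sum is over unordered pairs of distinct parts. -/

import Mathlib

open Finset

open scoped Classical


private lemma wt_fiber_sum {α β M : Type*} [Fintype α] [Fintype β] [DecidableEq β]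
    [AddCommMonoid M] (c : α → β) (g : β → α → M) :
    ∑ u : α, g (c u) u = ∑ P : β, ∑ u ∈ Finset.univ.filter (fun u => c u = P), g P u := by
  rw [← Finset.sum_fiberwise Finset.univ c (fun u => g (c u) u)]
  refine Finset.sum_congr rfl fun P _ => Finset.sum_congr rfl fun u hu => ?_
  rw [(Finset.mem_filter.mp hu).2]

private lemma wt_multi (n m : ℕ) (W : Fin n → ℝ) (c : Fin n → Fin m) :
    (∑ u : Fin n, ∑ v : Fin n, if c u ≠ c v then W u * W v else 0) =
    ∑ P : Fin m, ∑ Q : Fin m, if P ≠ Q then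
      (∑ v ∈ Finset.univ.filter (fun v => c v = P), W v) *
      (∑ v ∈ Finset.univ.filter (fun v => c v = Q), W v) else 0 := by
  rw [wt_fiber_sum c (fun P u => ∑ v : Fin n, if P ≠ c v then W u * W v else 0)]
  refine Finset.sum_congr rfl fun P _ => ?_
  have h1 : ∀ u : Fin n, (∑ v : Fin n, if P ≠ c v then W u * W v else 0) =
      ∑ Q : Fin m, ∑ v ∈ Finset.univ.filter (fun v => c v = Q),
        if P ≠ Q then W u * W v else 0 := fun u =>
    wt_fiber_sum c (fun Q v => if P ≠ Q then W u * W v else 0)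
  simp only [h1]
  rw [Finset.sum_comm]
  refine Finset.sum_congr rfl fun Q _ => ?_
  by_cases h : P = Q
  · simp [h]
  · simp only [ne_eq, h, not_false_eq_true, if_true]
    rw [Finset.sum_mul_sum]

private lemma wt_key (n : ℕ) (W : Fin n → ℝ) (hW : ∀ v, 0 ≤ W v) :
    ∀ k : ℕ, 1 ≤ k → ∀ (G : SimpleGraph (Fin n)) (s : Finset (Fin n)),
      (∀ t ⊆ s, G.IsClique (t : Set (Fin n)) → t.card ≤ k) →
      ∃ c : Fin n → Fin k,
        (∑ u ∈ s, ∑ v ∈ s, if G.Adj u v then W u * W v else 0) ≤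
        ∑ P : Fin k, ∑ Q : Fin k, if P ≠ Q then
          (∑ v ∈ s.filter (fun v => c v = P), W v) *
          (∑ v ∈ s.filter (fun v => c v = Q), W v) else 0 := by
  intro k
  induction k with
  | zero => intro h; omega
  | succ k ih =>
    intro _ G s hcl
    rcases Nat.eq_zero_or_pos k with hk0 | hkpos
    · -- base case k = 0 : no edges inside s
      subst hk0
      refine ⟨fun _ => 0, ?_⟩
      have hL : (∑ u ∈ s, ∑ v ∈ s, if G.Adj u v then W u * W v else 0) = 0 := by
        refine Finset.sum_eq_zero fun u hu => Finset.sum_eq_zero fun v hv => ?_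
        rw [if_neg]
        intro hadj
        have hne : u ≠ v := G.ne_of_adj hadj
        have ht : ({u, v} : Finset (Fin n)) ⊆ s := by
          intro z hz; simp only [Finset.mem_insert, Finset.mem_singleton] at hz
          rcases hz with rfl | rfl <;> assumption
        have hcl2 : G.IsClique (({u, v} : Finset (Fin n)) : Set (Fin n)) := by
          simp only [Finset.coe_insert, Finset.coe_singleton]
          exact SimpleGraph.isClique_pair.mpr fun _ => hadj
        have := hcl _ ht hcl2
        rw [Finset.card_insert_of_notMem (by simpa using hne), Finset.card_singleton] at this
        omega
      have hR : (∑ P : Fin 1, ∑ Q : Fin 1, if P ≠ Q then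
          (∑ v ∈ s.filter (fun v => (0 : Fin 1) = P), W v) *
          (∑ v ∈ s.filter (fun v => (0 : Fin 1) = Q), W v) else 0) = 0 := by
        refine Finset.sum_eq_zero fun P _ => Finset.sum_eq_zero fun Q _ => ?_
        rw [if_neg]; simp [Subsingleton.elim P Q]
      rw [hL, hR]
    · -- inductive step
      rcases Finset.eq_empty_or_nonempty s with rfl | hs
      · refine ⟨fun _ => 0, ?_⟩
        simp only [Finset.sum_empty, Finset.filter_empty]
        refine Finset.sum_nonneg fun P _ => Finset.sum_nonneg fun Q _ => ?_
        split
        · simp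
        · exact le_refl 0
      · obtain ⟨x, hxs, hxmax⟩ := s.exists_max_image
          (fun x => ∑ y ∈ s.filter (fun y => G.Adj x y), W y) hs
        set N : Finset (Fin n) := s.filter (fun y => G.Adj x y) with hN
        have hNs : N ⊆ s := Finset.filter_subset _ _
        have hxN : x ∉ N := by
          simp [hN, SimpleGraph.irrefl]
        -- cliques in N have size ≤ k
        have hNcl : ∀ t ⊆ N, G.IsClique (t : Set (Fin n)) → t.card ≤ k := by
          intro t ht htcl
          have hxt : x ∉ t := fun h => hxN (ht h)
          have hins : insert x t ⊆ s :=
            Finset.insert_subset hxs (ht.trans hNs)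
          have hinscl : G.IsClique ((insert x t : Finset (Fin n)) : Set (Fin n)) := by
            rw [Finset.coe_insert]
            refine htcl.insert fun b hb _ => ?_
            have := ht hb
            simp only [hN, Finset.mem_filter] at this
            exact this.2
          have := hcl _ hins hinscl
          rw [Finset.card_insert_of_notMem hxt] at this
          omega
        obtain ⟨c', hc'⟩ := ih hkpos G N hNcl
        refine ⟨fun v => if v ∈ N then (c' v).castSucc else Fin.last k, ?_⟩
        set c : Fin n → Fin (k + 1) :=
          fun v => if v ∈ N then (c' v).castSucc else Fin.last k with hc
        -- fiber identification
        have hfib : ∀ P : Fin k, s.filter (fun v => c v = P.castSucc) =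
            N.filter (fun v => c' v = P) := by
          intro P
          ext v
          simp only [Finset.mem_filter, hc]
          constructor
          · rintro ⟨hvs, hv⟩
            by_cases hvN : v ∈ N
            · rw [if_pos hvN] at hv
              exact ⟨hvN, Fin.castSucc_injective _ hv⟩
            · rw [if_neg hvN] at hv
              exact absurd hv.symm (Fin.castSucc_lt_last P).ne
          · rintro ⟨hvN, hv⟩
            exact ⟨hNs hvN, by rw [if_pos hvN, hv]⟩
        have hfibl : s.filter (fun v => c v = Fin.last k) = s \ N := by
          ext v
          simp only [Finset.mem_filter, Finset.mem_sdiff, hc]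
          constructor
          · rintro ⟨hvs, hv⟩
            refine ⟨hvs, fun hvN => ?_⟩
            rw [if_pos hvN] at hv
            exact (Fin.castSucc_lt_last (c' v)).ne hv
          · rintro ⟨hvs, hvN⟩
            exact ⟨hvs, by rw [if_neg hvN]⟩
        set WN : ℝ := ∑ v ∈ N, W v with hWN
        set WA : ℝ := ∑ v ∈ s \ N, W v with hWA
        set B : ℝ := ∑ P : Fin k, ∑ Q : Fin k, if P ≠ Q then
          (∑ v ∈ N.filter (fun v => c' v = P), W v) *
          (∑ v ∈ N.filter (fun v => c' v = Q), W v) else 0 with hB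
        have hsum' : ∑ P : Fin k, ∑ v ∈ N.filter (fun v => c' v = P), W v = WN :=
          Finset.sum_fiberwise N c' W
        have hRHS : (∑ P : Fin (k+1), ∑ Q : Fin (k+1), if P ≠ Q then
            (∑ v ∈ s.filter (fun v => c v = P), W v) *
            (∑ v ∈ s.filter (fun v => c v = Q), W v) else 0) = B + WN * WA + WA * WN := by
          rw [Fin.sum_univ_castSucc]
          simp only [Fin.sum_univ_castSucc, hfib, hfibl, ne_eq, Fin.castSucc_inj,
            (Fin.castSucc_lt_last _).ne, (Fin.castSucc_lt_last _).ne', not_false_eq_true,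
            if_true, not_true_eq_false, if_false]
          rw [Finset.sum_add_distrib, ← Finset.sum_mul, ← Finset.mul_sum, hsum', ← hWA, ← hB]
          ring
        rw [hRHS]
        -- edge weight nonnegativity
        have hedge : ∀ u v : Fin n, 0 ≤ (if G.Adj u v then W u * W v else 0) := by
          intro u v; split
          · exact mul_nonneg (hW u) (hW v)
          · exact le_refl 0
        have hrow : ∀ u ∈ s, (∑ v ∈ s, if G.Adj u v then W u * W v else 0)
            = W u * ∑ y ∈ s.filter (fun y => G.Adj u y), W y := by
          intro u hu
          rw [Finset.mul_sum, Finset.sum_filter]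
        have hrowle : ∀ u ∈ s, (∑ v ∈ s, if G.Adj u v then W u * W v else 0) ≤ W u * WN := by
          intro u hu
          rw [hrow u hu]
          exact mul_le_mul_of_nonneg_left (hxmax u hu) (hW u)
        have hcolle : ∀ v ∈ s, (∑ u ∈ s, if G.Adj u v then W u * W v else 0) ≤ W v * WN := by
          intro v hv
          have : (∑ u ∈ s, if G.Adj u v then W u * W v else 0)
              = ∑ u ∈ s, if G.Adj v u then W v * W u else 0 :=
            Finset.sum_congr rfl fun u _ =>
              if_congr (G.adj_comm u v) (mul_comm (W u) (W v)) rfl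
          rw [this]
          exact hrowle v hv
        have hsplit : (∑ u ∈ s, ∑ v ∈ s, if G.Adj u v then W u * W v else 0)
            = (∑ u ∈ s \ N, ∑ v ∈ s, if G.Adj u v then W u * W v else 0)
            + (∑ u ∈ N, ∑ v ∈ s, if G.Adj u v then W u * W v else 0) :=
          (Finset.sum_sdiff hNs).symm
        have h1 : (∑ u ∈ s \ N, ∑ v ∈ s, if G.Adj u v then W u * W v else 0) ≤ WA * WN := by
          rw [hWA, Finset.sum_mul]
          exact Finset.sum_le_sum fun u hu => hrowle u (Finset.mem_sdiff.mp hu).1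
        have h2 : (∑ u ∈ N, ∑ v ∈ s, if G.Adj u v then W u * W v else 0)
            = (∑ u ∈ N, ∑ v ∈ s \ N, if G.Adj u v then W u * W v else 0)
            + (∑ u ∈ N, ∑ v ∈ N, if G.Adj u v then W u * W v else 0) := by
          rw [← Finset.sum_add_distrib]
          exact Finset.sum_congr rfl fun u _ => (Finset.sum_sdiff hNs).symm
        have h3 : (∑ u ∈ N, ∑ v ∈ s \ N, if G.Adj u v then W u * W v else 0) ≤ WA * WN := by
          rw [Finset.sum_comm, hWA, Finset.sum_mul]
          refine Finset.sum_le_sum fun v hv => ?_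
          calc (∑ u ∈ N, if G.Adj u v then W u * W v else 0)
              ≤ ∑ u ∈ s, if G.Adj u v then W u * W v else 0 :=
                Finset.sum_le_sum_of_subset_of_nonneg hNs fun u _ _ => hedge u v
            _ ≤ W v * WN := hcolle v (Finset.mem_sdiff.mp hv).1
        have h4 : (∑ u ∈ N, ∑ v ∈ N, if G.Adj u v then W u * W v else 0) ≤ B := hc'
        rw [hsplit, h2]
        linarith [mul_comm WA WN]


open scoped Classical

open scoped Classical in
/-- For every `n ≥ 1`, `ℓ ≥ 2` and nonnegative vertex-weight function
`W : V(K_n) → [0,∞)`, the product-edge-weight extremal number `ex(n, w_Π, K_ℓ)` (the maximum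
of `∑_{uv ∈ E(G)} W(u)W(v)` over `K_ℓ`-free graphs `G` on `n` vertices) equals the maximum,
over all partitions of the vertex set into `ℓ - 1` (possibly empty) parts, of
`∑_{P ≠ P'} W(P) W(P')` (sum over unordered pairs of distinct parts).
Weights of graphs and partition-pair sums are expressed as half the sum over ordered pairs. -/
theorem product_weight_turan (n ℓ : ℕ) (hn : 1 ≤ n) (hℓ : 2 ≤ ℓ)
    (W : Fin n → ℝ) (hW : ∀ v, 0 ≤ W v) :
    ∃ x : ℝ,
      IsGreatest {y : ℝ | ∃ G : SimpleGraph (Fin n), G.CliqueFree ℓ ∧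
        y = (∑ u : Fin n, ∑ v : Fin n, if G.Adj u v then W u * W v else 0) / 2} x ∧
      IsGreatest {y : ℝ | ∃ c : Fin n → Fin (ℓ - 1),
        y = (∑ P : Fin (ℓ - 1), ∑ Q : Fin (ℓ - 1), if P ≠ Q then
              (∑ v ∈ Finset.univ.filter (fun v => c v = P), W v) *
              (∑ v ∈ Finset.univ.filter (fun v => c v = Q), W v) else 0) / 2} x := by
  have hm : 1 ≤ ℓ - 1 := by omega
  haveI : Nonempty (Fin (ℓ - 1)) := ⟨⟨0, by omega⟩⟩
  set pv : (Fin n → Fin (ℓ - 1)) → ℝ := fun c =>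
    (∑ P : Fin (ℓ - 1), ∑ Q : Fin (ℓ - 1), if P ≠ Q then
      (∑ v ∈ Finset.univ.filter (fun v => c v = P), W v) *
      (∑ v ∈ Finset.univ.filter (fun v => c v = Q), W v) else 0) / 2 with hpv
  have hFne : ((Finset.univ : Finset (Fin n → Fin (ℓ - 1))).image pv).Nonempty :=
    Finset.Nonempty.image Finset.univ_nonempty pv
  set x := ((Finset.univ : Finset (Fin n → Fin (ℓ - 1))).image pv).max' hFne with hx
  obtain ⟨c₀, -, hc₀⟩ := Finset.mem_image.mp (Finset.max'_mem _ hFne)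
  -- the complete multipartite graph of a coloring
  set mkG : (Fin n → Fin (ℓ - 1)) → SimpleGraph (Fin n) := fun c =>
    { Adj := fun u v => c u ≠ c v,
      symm := ⟨fun u v h => Ne.symm h⟩,
      loopless := ⟨fun u h => h rfl⟩ } with hmkG
  have hfree : ∀ c, (mkG c).CliqueFree ℓ := by
    intro c t ht
    have hinj : Set.InjOn c (t : Set (Fin n)) := by
      intro a ha b hb hab
      by_contra hne
      exact (ht.1 ha hb hne) hab
    have := Finset.card_le_card_of_injOn c (fun a _ => Finset.mem_univ (c a)) hinj
    rw [ht.2, Finset.card_univ, Fintype.card_fin] at this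
    omega
  have hval : ∀ c, (∑ u : Fin n, ∑ v : Fin n, if (mkG c).Adj u v then W u * W v else 0)
      = ∑ P : Fin (ℓ - 1), ∑ Q : Fin (ℓ - 1), if P ≠ Q then
          (∑ v ∈ Finset.univ.filter (fun v => c v = P), W v) *
          (∑ v ∈ Finset.univ.filter (fun v => c v = Q), W v) else 0 := by
    intro c
    rw [← wt_multi n (ℓ - 1) W c]
  have h2 : (∑ u : Fin n, ∑ v : Fin n, if (mkG c₀).Adj u v then W u * W v else 0)
      = ∑ u : Fin n, ∑ v : Fin n, if c₀ u ≠ c₀ v then W u * W v else 0 :=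
    Finset.sum_congr rfl fun u _ => Finset.sum_congr rfl fun v _ => if_congr Iff.rfl rfl rfl
  refine ⟨x, ⟨⟨mkG c₀, hfree c₀, by
      rw [hx, ← hc₀, hpv]
      dsimp only
      rw [← wt_multi n (ℓ - 1) W c₀]
      congr!⟩, ?_⟩,
    ⟨⟨c₀, by rw [hx, ← hc₀]⟩, ?_⟩⟩
  · rintro y ⟨G, hGfree, rfl⟩
    have hcl : ∀ t ⊆ (Finset.univ : Finset (Fin n)), G.IsClique (t : Set (Fin n)) →
        t.card ≤ ℓ - 1 := by
      intro t _ htcl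
      by_contra hbig
      push_neg at hbig
      obtain ⟨t', ht's, ht'c⟩ := Finset.exists_subset_card_eq (show ℓ ≤ t.card by omega)
      exact hGfree t' ⟨htcl.subset (Finset.coe_subset.mpr ht's), ht'c⟩
    obtain ⟨c, hc⟩ := wt_key n W hW (ℓ - 1) hm G Finset.univ hcl
    have hy : (∑ u : Fin n, ∑ v : Fin n, if G.Adj u v then W u * W v else 0) / 2 ≤ pv c := by
      rw [hpv]; dsimp only; linarith [hc]
    exact hy.trans (Finset.le_max' _ _ (Finset.mem_image_of_mem pv (Finset.mem_univ c)))
  · rintro y ⟨c, rfl⟩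
    exact Finset.le_max' _ _ (Finset.mem_image_of_mem pv (Finset.mem_univ c))
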